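/- Let w be a word containing two palindromic factors P1 = w[c1 - r1 .. c1 + r1] and P2 = w[c2 - r2 .. c2 + r2] with c1 < c2, such that each contains the other's centre and neither is a proper factor of the other. Then there exist palindromes s and t with |s| + |t| = 2(c2 - c1) such that the union w[c1 - r1 .. c2 + r2] is a factor of (st)^ω; i.e., the union is a palindromic periodicity with period 2(c2 - c1). -/
import Mathlib


/-- `w` (of length `n`) is a palindromic periodicity with period `p`: there are
palindromes `s` (length `sl`) and `t` (length `p - sl`), encoded as the word
`u = st` of length `p`, such that `w` is a factor of `(st)^ω` and `|w| ≥ p`. -/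
def PalPer {α : Type*} (w : ℕ → α) (n p : ℕ) : Prop :=
  0 < p ∧ p ≤ n ∧
    ∃ (sl : ℕ) (u : ℕ → α) (k : ℕ), sl ≤ p ∧
      (∀ i j, i + j + 1 = sl → u i = u j) ∧
      (∀ i j, sl ≤ i → sl ≤ j → i + j + 1 = sl + p → u i = u j) ∧
      (∀ i < n, w i = u ((k + i) % p))

/-- Two palindromic factors `w[a1..b1]`, `w[a2..b2]` with doubled centres
`a1+b1 < a2+b2`, each containing the other's centre (`2a2 ≤ a1+b1` and
`a2+b2 ≤ 2b1`), neither a proper factor of the other (`a1 ≤ a2`, `b1 ≤ b2`):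
then the union `w[a1..b2]` is a palindromic periodicity with period
`2(c2 - c1) = (a2+b2) - (a1+b1)`. -/
theorem stmt_10 {α : Type*} (w : ℕ → α) (a1 b1 a2 b2 : ℕ)
    (hpal1 : ∀ i j, a1 ≤ i → a1 ≤ j → i + j = a1 + b1 → w i = w j)
    (hpal2 : ∀ i j, a2 ≤ i → a2 ≤ j → i + j = a2 + b2 → w i = w j)
    (hcc : a1 + b1 < a2 + b2)
    (hc1 : 2 * a2 ≤ a1 + b1) (hc2 : a2 + b2 ≤ 2 * b1)
    (hf1 : a1 ≤ a2) (hf2 : b1 ≤ b2) :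
    PalPer (fun i => w (a1 + i)) (b2 - a1 + 1) ((a2 + b2) - (a1 + b1)) := by
  set p := (a2 + b2) - (a1 + b1) with hpdef
  have hp : 0 < p := by omega
  -- periodicity with period p on [a1, b2]
  have hper : ∀ x, a1 ≤ x → x + p ≤ b2 → w x = w (x + p) := by
    intro x hx hxp
    have e1 : w x = w (a1 + b1 - x) := hpal1 x _ hx (by omega) (by omega)
    have e2 : w (a1 + b1 - x) = w (x + p) := hpal2 _ _ (by omega) (by omega) (by omega)
    rw [e1, e2]
  have hstep : ∀ m x, a1 ≤ x → x + m * p ≤ b2 → w x = w (x + m * p) := by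
    intro m
    induction m with
    | zero => intro x _ _; simp
    | succ m ih =>
      intro x hx hxb
      have hmul : (m + 1) * p = m * p + p := by ring
      rw [hmul] at hxb ⊢
      have h1 : w x = w (x + p) := hper x hx (by omega)
      have h2 : w (x + p) = w (x + p + m * p) := ih (x + p) (by omega) (by omega)
      have h3 : x + (m * p + p) = x + p + m * p := by ring
      rw [h3]; exact h1.trans h2
  have hcong : ∀ x y, a1 ≤ x → x ≤ b2 → a1 ≤ y → y ≤ b2 → x % p = y % p → w x = w y := by
    have key : ∀ x y, x ≤ y → a1 ≤ x → y ≤ b2 → x % p = y % p → w x = w y := by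
      intro x y hxy hx hy h
      obtain ⟨m, hm⟩ := (Nat.modEq_iff_dvd' hxy).mp h
      have hm' : y = x + m * p := by
        have : m * p = p * m := by ring
        omega
      rw [hm']
      exact hstep m x hx (by omega)
    intro x y hx hxb hy hyb h
    rcases le_total x y with hle | hle
    · exact key x y hle hx hyb h
    · exact (key y x hle hy hxb h.symm).symm
  set aS := min ((a1 + b1 + 1) / 2) (a1 + b1 + 1 - a2) with haS
  set sl := a1 + b1 + 1 - 2 * aS with hsl
  set d := aS - a1 with hd
  set k := p - d % p with hk
  have hdp : d % p < p := Nat.mod_lt _ hp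
  have hdm := Nat.div_add_mod d p
  refine ⟨hp, by omega, sl, fun i => w (aS + i), k, by omega, ?_, ?_, ?_⟩
  · intro i j hij
    exact hpal1 (aS + i) (aS + j) (by omega) (by omega) (by omega)
  · intro i j hi hj hij
    exact hpal2 (aS + i) (aS + j) (by omega) (by omega) (by omega)
  · intro i hi
    have hr : (k + i) % p < p := Nat.mod_lt _ hp
    show w (a1 + i) = w (aS + (k + i) % p)
    apply hcong _ _ (by omega) (by omega) (by omega) (by omega)
    have h1 : (aS + (k + i) % p) % p = (aS + (k + i)) % p :=
      (Nat.ModEq.add_left aS (Nat.mod_modEq (k + i) p))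
    have key : aS + (k + i) = (a1 + i) + (d / p + 1) * p := by
      have h2 : (d / p + 1) * p = d / p * p + p := by ring
      have h3 : p * (d / p) = d / p * p := by ring
      omega
    rw [h1, key, Nat.add_mul_mod_self_right]
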